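/- For a labeled poset (P,ω) of size p, the generating function G_{P,ω}(q) = Σ_{f ∈ A(P,ω)} q^{|f|}, where |f| = Σ_{t∈P} f(t), equals (Σ_{σ ∈ L(P,ω)} q^{maj(σ)}) / ∏_{i=1}^{p} (1 − q^i), as formal power series in q. -/

import Mathlib

open Finset Polynomial
open scoped Classical

/-- The set of linear extensions of a finite poset `P`, i.e. order-preserving
bijections `P ≃ Fin n`. -/
noncomputable def linExts (P : Type) [Fintype P] [PartialOrder P] (n : ℕ) :
    Finset (P ≃ Fin n) :=
  Finset.univ.filter fun f => ∀ x y : P, x ≤ y → f x ≤ f y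

/-- The word of a linear extension `f` with respect to the labeling `ω`. -/
def word {P : Type} {n : ℕ} (ω : P → ℕ) (f : P ≃ Fin n) : Fin n → ℕ :=
  fun i => ω (f.symm i)

/-- The major index of a word: the sum of the (1-indexed) descent positions. -/
def majW {n : ℕ} (w : Fin n → ℕ) : ℕ :=
  ∑ i : Fin n, if h : (i : ℕ) + 1 < n then
    (if w ⟨(i : ℕ) + 1, h⟩ < w i then (i : ℕ) + 1 else 0) else 0

/-- The number of inversions of a word. -/
noncomputable def invW {n : ℕ} (w : Fin n → ℕ) : ℕ :=
  ((Finset.univ : Finset (Fin n × Fin n)).filter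
    (fun p => p.1 < p.2 ∧ w p.2 < w p.1)).card

/-- Major index `q`-analogue of the number of linear extensions of `(P, ω)`. -/
noncomputable def eMaj (P : Type) [Fintype P] [PartialOrder P] (ω : P → ℕ) :
    Polynomial ℤ :=
  ∑ f ∈ linExts P (Fintype.card P), Polynomial.X ^ majW (word ω f)

/-- Inversion `q`-analogue of the number of linear extensions of `(P, ω)`. -/
noncomputable def eInv (P : Type) [Fintype P] [PartialOrder P] (ω : P → ℕ) :
    Polynomial ℤ :=
  ∑ f ∈ linExts P (Fintype.card P), Polynomial.X ^ invW (word ω f)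

/-- Major index `q`-analogue of linear extensions whose last letter is the label
of an element of `S`. -/
noncomputable def eMajEndIn (P : Type) [Fintype P] [PartialOrder P]
    (ω : P → ℕ) (S : Set P) : Polynomial ℤ :=
  ∑ f ∈ (linExts P (Fintype.card P)).filter (fun f => ∃ s ∈ S, ∀ x, f x ≤ f s),
    Polynomial.X ^ majW (word ω f)

/-- The Gaussian binomial coefficient `[n choose k]_q`, defined by the
`q`-Pascal recurrence. -/
noncomputable def qBinom : ℕ → ℕ → Polynomial ℤ
  | _, 0 => 1
  | 0, _ + 1 => 0
  | n + 1, k + 1 => qBinom n k + Polynomial.X ^ (k + 1) * qBinom n (k + 1)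

/-- `(P,ω)`-partition. -/
def IsPPart {α : Type} [PartialOrder α] (ω : α → ℕ) (f : α → ℕ) : Prop :=
  ∀ s t : α, s ≤ t → f t ≤ f s ∧ (ω t < ω s → f t < f s)

/-- `(P,ω;s)`-partition. -/
def IsPPartS {α : Type} [PartialOrder α] (ω : α → ℕ) (s : α) (f : α → ℕ) : Prop :=
  IsPPart ω f ∧ (∀ t, f s ≤ f t) ∧ ∀ t, t ≠ s → f s = f t → ω t < ω s

/-- Generating function by size for the maps `α → ℕ` satisfying `pred`. -/
noncomputable def GPart (α : Type) [Fintype α] (pred : (α → ℕ) → Prop) :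
    PowerSeries ℚ :=
  PowerSeries.mk fun m => (Set.ncard {f : α → ℕ | pred f ∧ ∑ t, f t = m} : ℚ)

/-! ### Auxiliary development -/

section Seq
variable {p : ℕ}

/-- descent at position `i` (0-indexed pair `(i, i+1)`). -/
def DesAt (w : Fin p → ℕ) (i : ℕ) : Prop :=
  ∃ h : i + 1 < p, w ⟨i+1, h⟩ < w ⟨i, by omega⟩

/-- number of descents at positions `≥ i`. -/
noncomputable def cnt (w : Fin p → ℕ) (i : ℕ) : ℕ :=
  ((Finset.range p).filter fun j => i ≤ j ∧ DesAt w j).card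

/-- compatibility of `g` with the word `w`. -/
def Cmp (w g : Fin p → ℕ) : Prop :=
  ∀ i (h : i + 1 < p),
    g ⟨i+1, h⟩ + (if w ⟨i+1, h⟩ < w ⟨i, by omega⟩ then 1 else 0) ≤ g ⟨i, by omega⟩

lemma desAt_iff (w : Fin p → ℕ) {i : ℕ} (h : i + 1 < p) :
    DesAt w i ↔ w ⟨i+1, h⟩ < w ⟨i, by omega⟩ := by
  constructor
  · rintro ⟨h', hlt⟩; exact hlt
  · intro hlt; exact ⟨h, hlt⟩

lemma desAt_lt (w : Fin p → ℕ) {i : ℕ} (h : DesAt w i) : i + 1 < p := h.1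

lemma cnt_succ (w : Fin p → ℕ) (i : ℕ) :
    cnt w i = cnt w (i+1) + (if DesAt w i then 1 else 0) := by
  classical
  unfold cnt
  by_cases h : DesAt w i
  · rw [if_pos h]
    have hip : i + 1 < p := h.1
    have hins : (Finset.range p).filter (fun j => i ≤ j ∧ DesAt w j)
        = insert i ((Finset.range p).filter fun j => i+1 ≤ j ∧ DesAt w j) := by
      ext j
      simp only [Finset.mem_insert, Finset.mem_filter, Finset.mem_range]
      constructor
      · rintro ⟨hj, hij, hd⟩
        rcases eq_or_lt_of_le hij with rfl | h2
        · exact Or.inl rfl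
        · exact Or.inr ⟨hj, h2, hd⟩
      · rintro (rfl | ⟨hj, hij, hd⟩)
        · exact ⟨by omega, le_refl _, h⟩
        · exact ⟨hj, by omega, hd⟩
    rw [hins, Finset.card_insert_of_notMem (by simp)]
  · rw [if_neg h, add_zero]
    congr 1
    ext j
    simp only [Finset.mem_filter, Finset.mem_range]
    constructor
    · rintro ⟨hj, hij, hd⟩
      refine ⟨hj, ?_, hd⟩
      rcases eq_or_lt_of_le hij with rfl | h2
      · exact absurd hd h
      · omega
    · rintro ⟨hj, hij, hd⟩
      exact ⟨hj, by omega, hd⟩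

lemma cnt_last (w : Fin p → ℕ) (i : ℕ) (hi : p ≤ i + 1) : cnt w i = 0 := by
  unfold cnt
  rw [Finset.card_eq_zero, Finset.eq_empty_iff_forall_notMem]
  intro j hj
  simp only [Finset.mem_filter, Finset.mem_range] at hj
  obtain ⟨hjp, hij, hd⟩ := hj
  have := hd.1
  omega

lemma sum_cnt (w : Fin p → ℕ) : ∑ i ∈ Finset.range p, cnt w i = majW w := by
  classical
  have h1 : ∀ i, cnt w i = ∑ j ∈ Finset.range p, (if i ≤ j ∧ DesAt w j then 1 else 0) := by
    intro i
    rw [cnt, Finset.card_filter]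
  calc ∑ i ∈ Finset.range p, cnt w i
      = ∑ i ∈ Finset.range p, ∑ j ∈ Finset.range p,
          (if i ≤ j ∧ DesAt w j then 1 else 0) := by
        exact Finset.sum_congr rfl fun i _ => h1 i
    _ = ∑ j ∈ Finset.range p, ∑ i ∈ Finset.range p,
          (if i ≤ j ∧ DesAt w j then 1 else 0) := Finset.sum_comm
    _ = ∑ j ∈ Finset.range p, (if DesAt w j then j + 1 else 0) := by
        refine Finset.sum_congr rfl fun j hj => ?_
        rw [Finset.mem_range] at hj
        by_cases hd : DesAt w j
        · rw [if_pos hd, ← Finset.card_filter]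
          have : (Finset.range p).filter (fun i => i ≤ j ∧ DesAt w j)
              = Finset.range (j+1) := by
            ext i
            simp only [Finset.mem_filter, Finset.mem_range]
            constructor
            · rintro ⟨_, h2, _⟩; omega
            · intro h2; exact ⟨by omega, by omega, hd⟩
          rw [this, Finset.card_range]
        · simp [hd]
    _ = majW w := by
        rw [majW, Fin.sum_univ_eq_sum_range
          (fun i => if h : i + 1 < p then
            (if w ⟨i + 1, h⟩ < w ⟨i, by omega⟩ then i + 1 else 0) else 0)]
        refine Finset.sum_congr rfl fun j hj => ?_
        rw [Finset.mem_range] at hj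
        by_cases h2 : j + 1 < p
        · rw [dif_pos h2]
          by_cases hd : w ⟨j+1, h2⟩ < w ⟨j, by omega⟩
          · rw [if_pos hd, if_pos ((desAt_iff w h2).mpr hd)]
          · rw [if_neg hd, if_neg (fun hc => hd ((desAt_iff w h2).mp hc))]
        · rw [dif_neg h2, if_neg (fun hc => h2 hc.1)]

lemma cmp_le_of_le (w g : Fin p → ℕ) (hg : Cmp w g) {i j : ℕ} (hij : i ≤ j) (hj : j < p) :
    g ⟨j, hj⟩ ≤ g ⟨i, by omega⟩ := by
  induction j with
  | zero => interval_cases i; rfl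
  | succ j ih =>
    rcases Nat.eq_or_lt_of_le hij with rfl | h2
    · rfl
    · have h3 := hg j hj
      have h4 := ih (by omega) (by omega)
      split_ifs at h3 <;> omega

/-- key comparison along a compatible word, for injective `w`. -/
lemma cmp_key (w g : Fin p → ℕ) (hw : Function.Injective w) (hg : Cmp w g)
    {i j : ℕ} (hij : i < j) (hj : j < p) :
    g ⟨j, hj⟩ < g ⟨i, by omega⟩ ∨
      (g ⟨j, hj⟩ = g ⟨i, by omega⟩ ∧ w ⟨i, by omega⟩ < w ⟨j, hj⟩) := by
  induction j with
  | zero => omega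
  | succ j ih =>
    have hs := hg j hj
    have hwne : w ⟨j+1, hj⟩ ≠ w ⟨j, by omega⟩ := by
      intro hc
      have := hw hc
      simp only [Fin.mk.injEq] at this
      omega
    rcases Nat.eq_or_lt_of_le hij with heq | h2
    · -- j = i, consecutive case
      have hji : j = i := by omega
      subst hji
      split_ifs at hs with hd
      · exact Or.inl (by omega)
      · rcases Nat.eq_or_lt_of_le (by omega : g ⟨j+1, hj⟩ ≤ g ⟨j, by omega⟩) with heq2 | hlt
        · exact Or.inr ⟨heq2, by omega⟩
        · exact Or.inl hlt
    · have hprev := ih (by omega) (by omega)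
      split_ifs at hs with hd
      · left
        rcases hprev with h | ⟨h, _⟩ <;> omega
      · rcases hprev with h | ⟨heq2, hwlt⟩
        · left; omega
        · rcases Nat.eq_or_lt_of_le (by omega : g ⟨j+1, hj⟩ ≤ g ⟨j, by omega⟩) with heq3 | hlt
          · right
            refine ⟨by omega, ?_⟩
            have : w ⟨j, by omega⟩ < w ⟨j+1, hj⟩ := by omega
            omega
          · left; omega

lemma cnt_le_g (w g : Fin p → ℕ) (hg : Cmp w g) {i : ℕ} (hi : i < p) :
    cnt w i ≤ g ⟨i, hi⟩ := by
  have key : ∀ d i (hi : i < p), p - i ≤ d → cnt w i ≤ g ⟨i, hi⟩ := by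
    intro d
    induction d with
    | zero => intro i hi h; omega
    | succ d ih =>
      intro i hi h
      by_cases hip : i + 1 < p
      · have h2 := ih (i+1) hip (by omega)
        have h3 := hg i hip
        rw [cnt_succ]
        by_cases hd : DesAt w i
        · rw [if_pos hd]
          rw [if_pos ((desAt_iff w hip).mp hd)] at h3
          omega
        · rw [if_neg hd]
          rw [if_neg (fun hc => hd ((desAt_iff w hip).mpr hc))] at h3
          omega
      · rw [cnt_last w i (by omega)]
        exact Nat.zero_le _
  exact key (p - i) i hi le_rfl

lemma cmp_sub_antitone (w g : Fin p → ℕ) (hg : Cmp w g) {i j : ℕ}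
    (hij : i ≤ j) (hj : j < p) :
    g ⟨j, hj⟩ - cnt w j ≤ g ⟨i, by omega⟩ - cnt w i := by
  induction j with
  | zero => interval_cases i; omega
  | succ j ih =>
    rcases Nat.eq_or_lt_of_le hij with rfl | h2
    · omega
    · have h3 := hg j hj
      have h4 := ih (by omega) (by omega)
      have h5 := cnt_succ w j
      have h6 := cnt_le_g w g hg (by omega : j < p)
      have h7 := cnt_le_g w g hg hj
      by_cases hd : DesAt w j
      · rw [if_pos hd] at h5
        rw [if_pos ((desAt_iff w (by omega)).mp hd)] at h3
        omega
      · rw [if_neg hd] at h5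
        rw [if_neg (fun hc => hd ((desAt_iff w (by omega)).mpr hc))] at h3
        omega

end Seq

section Dec

/-- number of antitone `q`-tuples with sum `m` (partitions into at most `q` parts). -/
noncomputable def dec (q m : ℕ) : ℕ :=
  Set.ncard {h : Fin q → ℕ | Antitone h ∧ ∑ t, h t = m}

/-- generating function of `dec q`. -/
noncomputable def Dec (q : ℕ) : PowerSeries ℚ :=
  PowerSeries.mk fun m => (dec q m : ℚ)

lemma finite_sum_eq {α : Type} [Fintype α] (pred : (α → ℕ) → Prop) (m : ℕ) :
    {f : α → ℕ | pred f ∧ ∑ t, f t = m}.Finite := by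
  apply Set.Finite.subset (Set.Finite.pi (fun _ : α => Set.finite_Iic m))
  intro f hf
  simp only [Set.mem_pi, Set.mem_univ, Set.mem_Iic, forall_true_left]
  intro t
  rw [← hf.2]
  exact Finset.single_le_sum (fun _ _ => Nat.zero_le _) (Finset.mem_univ t)

lemma dec_zero (m : ℕ) : dec 0 m = if m = 0 then 1 else 0 := by
  unfold dec
  split_ifs with hm
  · subst hm
    have h1 : {h : Fin 0 → ℕ | Antitone h ∧ ∑ t, h t = 0}
        = {fun i => i.elim0} := by
      ext h
      simp only [Set.mem_setOf_eq, Set.mem_singleton_iff]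
      constructor
      · intro _; funext i; exact i.elim0
      · rintro rfl
        exact ⟨fun i j _ => i.elim0, by simp⟩
    rw [h1, Set.ncard_singleton]
  · rw [Set.ncard_eq_zero (finite_sum_eq _ _)]
    ext h
    simp only [Set.mem_setOf_eq, Set.mem_empty_iff_false, iff_false, not_and]
    intro _
    simp only [Finset.univ_eq_empty, Finset.sum_empty]
    omega

lemma dec_succ (q m : ℕ) :
    dec (q+1) m = dec q m + (if q + 1 ≤ m then dec (q+1) (m - (q+1)) else 0) := by
  classical
  set S0 : Set (Fin (q+1) → ℕ) :=
    {h | (Antitone h ∧ ∑ t, h t = m) ∧ h (Fin.last q) = 0} with hS0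
  set S1 : Set (Fin (q+1) → ℕ) :=
    {h | (Antitone h ∧ ∑ t, h t = m) ∧ h (Fin.last q) ≠ 0} with hS1
  have hsplit : {h : Fin (q+1) → ℕ | Antitone h ∧ ∑ t, h t = m} = S0 ∪ S1 := by
    ext h
    simp only [hS0, hS1, Set.mem_setOf_eq, Set.mem_union]
    tauto
  have hfin : ∀ pr : (Fin (q+1) → ℕ) → Prop,
      {h : Fin (q+1) → ℕ | (Antitone h ∧ ∑ t, h t = m) ∧ pr h}.Finite := by
    intro pr
    apply (finite_sum_eq (fun h : Fin (q+1) → ℕ => Antitone h) m).subset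
    rintro h ⟨⟨h1, h2⟩, _⟩
    exact ⟨h1, h2⟩
  have hdisj : Disjoint S0 S1 := by
    rw [Set.disjoint_left]
    rintro h ⟨_, h0⟩ ⟨_, h1⟩
    exact h1 h0
  have hadd : dec (q+1) m = S0.ncard + S1.ncard := by
    rw [dec, hsplit, Set.ncard_union_eq hdisj (hfin _) (hfin _)]
  -- S0 ≃ partitions with at most q parts
  have h0 : S0.ncard = dec q m := by
    have himg : S0 = (fun h' : Fin q → ℕ =>
        (fun i : Fin (q+1) => if hi : (i : ℕ) < q then h' ⟨i, hi⟩ else 0)) ''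
        {h' : Fin q → ℕ | Antitone h' ∧ ∑ t, h' t = m} := by
      ext h
      simp only [hS0, Set.mem_setOf_eq, Set.mem_image]
      constructor
      · rintro ⟨⟨hA, hsum⟩, hlast⟩
        refine ⟨fun i => h i.castSucc, ⟨?_, ?_⟩, ?_⟩
        · intro i j hij
          exact hA (by simpa using hij)
        · rw [Fin.sum_univ_castSucc, hlast, add_zero] at hsum
          exact hsum
        · funext i
          by_cases hi : (i : ℕ) < q
          · rw [dif_pos hi]
            have he : (⟨(i : ℕ), hi⟩ : Fin q).castSucc = i := by ext; simp
            show h (⟨(i : ℕ), hi⟩ : Fin q).castSucc = h i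
            rw [he]
          · rw [dif_neg hi]
            have he : i = Fin.last q := by ext; simp only [Fin.val_last]; omega
            rw [he]
            exact hlast.symm
      · rintro ⟨h', ⟨hA, hsum⟩, rfl⟩
        refine ⟨⟨?_, ?_⟩, ?_⟩
        · intro i j hij
          by_cases hj : (j : ℕ) < q
          · have hi : (i : ℕ) < q := by
              have := hij; simp only [Fin.le_def] at this; omega
            simp only [dif_pos hi, dif_pos hj]
            exact hA (Fin.mk_le_mk.mpr (Fin.le_def.mp hij))
          · simp only [dif_neg hj]
            exact Nat.zero_le _
        · rw [Fin.sum_univ_castSucc]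
          simp only [Fin.coe_castSucc, Fin.val_last]
          rw [dif_neg (lt_irrefl q), add_zero, ← hsum]
          exact Finset.sum_congr rfl fun i _ => by rw [dif_pos i.isLt]
        · show (if hi : ((Fin.last q : Fin (q+1)) : ℕ) < q
              then h' ⟨((Fin.last q : Fin (q+1)) : ℕ), hi⟩ else 0) = 0
          rw [dif_neg (by simp)]
    have hinj : Function.Injective (fun h' : Fin q → ℕ =>
        (fun i : Fin (q+1) => if hi : (i : ℕ) < q then h' ⟨i, hi⟩ else 0)) := by
      intro a b hab
      funext i
      have h2 := congrFun hab i.castSucc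
      simpa [i.isLt] using h2
    rw [himg, Set.ncard_image_of_injective _ hinj, dec]
  -- S1 ≃ partitions of m - (q+1)
  have h1 : S1.ncard = if q + 1 ≤ m then dec (q+1) (m - (q+1)) else 0 := by
    split_ifs with hm
    · have himg : S1 = (fun h' : Fin (q+1) → ℕ => (fun i => h' i + 1)) ''
          {h' : Fin (q+1) → ℕ | Antitone h' ∧ ∑ t, h' t = m - (q+1)} := by
        ext h
        simp only [hS1, Set.mem_setOf_eq, Set.mem_image]
        constructor
        · rintro ⟨⟨hA, hsum⟩, hlast⟩
          have hpos : ∀ i, 1 ≤ h i := by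
            intro i
            have := hA (Fin.le_last i)
            omega
          refine ⟨fun i => h i - 1, ⟨?_, ?_⟩, ?_⟩
          · intro i j hij
            show h j - 1 ≤ h i - 1
            have := hA hij
            omega
          · show ∑ t, (h t - 1) = m - (q + 1)
            have : ∑ t, (h t - 1) + ∑ _t : Fin (q+1), 1 = ∑ t, h t := by
              rw [← Finset.sum_add_distrib]
              exact Finset.sum_congr rfl fun i _ => by have := hpos i; omega
            simp only [Finset.sum_const, Finset.card_univ, Fintype.card_fin,
              smul_eq_mul, mul_one] at this
            omega
          · funext i
            show h i - 1 + 1 = h i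
            have := hpos i
            omega
        · rintro ⟨h', ⟨hA, hsum⟩, rfl⟩
          refine ⟨⟨?_, ?_⟩, by simp⟩
          · intro i j hij
            show h' j + 1 ≤ h' i + 1
            have := hA hij
            omega
          · show ∑ t, (h' t + 1) = m
            rw [Finset.sum_add_distrib, hsum]
            simp only [Finset.sum_const, Finset.card_univ, Fintype.card_fin,
              smul_eq_mul, mul_one]
            omega
      have hinj : Function.Injective (fun h' : Fin (q+1) → ℕ => (fun i => h' i + 1)) := by
        intro a b hab
        funext i
        have h2 := congrFun hab i
        simpa using h2
      rw [himg, Set.ncard_image_of_injective _ hinj, dec]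
    · rw [Set.ncard_eq_zero (hfin _)]
      ext h
      simp only [hS1, Set.mem_setOf_eq, Set.mem_empty_iff_false, iff_false, not_and]
      rintro ⟨hA, hsum⟩ hlast
      have hpos : ∀ i, 1 ≤ h i := by
        intro i
        have := hA (Fin.le_last i)
        omega
      have : (q+1) * 1 ≤ ∑ t, h t := by
        calc (q+1) * 1 = ∑ _t : Fin (q+1), 1 := by simp [mul_comm]
        _ ≤ ∑ t, h t := Finset.sum_le_sum fun i _ => hpos i
      omega
  rw [hadd, h0, h1]

lemma Dec_step (q : ℕ) :
    Dec (q+1) * (1 - (PowerSeries.X : PowerSeries ℚ) ^ (q + 1)) = Dec q := by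
  ext m
  rw [mul_sub, mul_one, map_sub, PowerSeries.coeff_mul_X_pow']
  simp only [Dec, PowerSeries.coeff_mk]
  rw [dec_succ q m]
  split_ifs with hm <;> push_cast <;> ring

lemma Dec_mul_prod (q : ℕ) :
    Dec q * ∏ i ∈ Finset.range q, (1 - (PowerSeries.X : PowerSeries ℚ) ^ (i + 1)) = 1 := by
  induction q with
  | zero =>
    rw [Finset.range_zero, Finset.prod_empty, mul_one]
    ext m
    simp only [Dec, PowerSeries.coeff_mk, dec_zero, PowerSeries.coeff_one]
    split_ifs <;> simp
  | succ q ih =>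
    rw [Finset.prod_range_succ,
      mul_comm (∏ i ∈ Finset.range q, (1 - (PowerSeries.X : PowerSeries ℚ) ^ (i + 1)))
        (1 - (PowerSeries.X : PowerSeries ℚ) ^ (q + 1)),
      ← mul_assoc, Dec_step, ih]

end Dec

section Main

variable {P : Type} [Fintype P] [PartialOrder P] {p : ℕ}

lemma word_injective (ω : P ≃ Fin p) (e : P ≃ Fin p) :
    Function.Injective (word (fun x => (ω x : ℕ)) e) := by
  intro i j h
  simpa using e.symm.injective (ω.injective (Fin.val_injective h))

/-- the canonical linear extension attached to `f` via the key sort. -/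
noncomputable def keyFun (ω : P ≃ Fin p) (f : P → ℕ) (x : P) : ℕ :=
  ((Finset.univ.sup f) - f x) * p + (ω x : ℕ)

lemma nat_key_lt_iff {p a b r r' : ℕ} (hr : r < p) (hr' : r' < p) :
    a * p + r < b * p + r' ↔ a < b ∨ (a = b ∧ r < r') := by
  constructor
  · intro h
    rcases lt_trichotomy a b with h1 | h1 | h1
    · exact Or.inl h1
    · subst h1
      exact Or.inr ⟨rfl, by omega⟩
    · exfalso
      have h2 : b * p + p ≤ a * p := by
        calc b * p + p = (b + 1) * p := by ring
          _ ≤ a * p := Nat.mul_le_mul_right p h1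
      omega
  · rintro (h1 | ⟨rfl, h1⟩)
    · have h2 : a * p + p ≤ b * p := by
        calc a * p + p = (a + 1) * p := by ring
          _ ≤ b * p := Nat.mul_le_mul_right p h1
      omega
    · omega

lemma keyFun_lt_iff (ω : P ≃ Fin p) (f : P → ℕ) (x y : P) :
    keyFun ω f x < keyFun ω f y ↔
      f y < f x ∨ (f y = f x ∧ (ω x : ℕ) < (ω y : ℕ)) := by
  unfold keyFun
  have hx : f x ≤ Finset.univ.sup f := Finset.le_sup (Finset.mem_univ x)
  have hy : f y ≤ Finset.univ.sup f := Finset.le_sup (Finset.mem_univ y)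
  rw [nat_key_lt_iff (ω x).isLt (ω y).isLt]
  constructor
  · rintro (h | ⟨h, h2⟩)
    · left; omega
    · right; exact ⟨by omega, h2⟩
  · rintro (h | ⟨h, h2⟩)
    · left; omega
    · right; exact ⟨by omega, h2⟩

lemma keyFun_injective (hp : Fintype.card P = p) (ω : P ≃ Fin p) (f : P → ℕ) :
    Function.Injective (keyFun ω f) := by
  intro x y h
  by_contra hne
  have hx := (ω x).isLt
  have hy := (ω y).isLt
  have hmod : ((Finset.univ.sup f - f x) * p + (ω x : ℕ)) % p
      = ((Finset.univ.sup f - f y) * p + (ω y : ℕ)) % p := by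
    show keyFun ω f x % p = keyFun ω f y % p
    rw [h]
  rw [show ((Finset.univ.sup f - f x) * p + ((ω x : ℕ))) % p = ((ω x : ℕ)) from by
      rw [mul_comm, Nat.mul_add_mod, Nat.mod_eq_of_lt hx],
    show ((Finset.univ.sup f - f y) * p + ((ω y : ℕ))) % p = ((ω y : ℕ)) from by
      rw [mul_comm, Nat.mul_add_mod, Nat.mod_eq_of_lt hy]] at hmod
  exact hne (ω.injective (Fin.val_injective hmod))

noncomputable def sortE (hp : Fintype.card P = p) (ω : P ≃ Fin p) (f : P → ℕ) : P ≃ Fin p :=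
  (Equiv.ofBijective
    (fun x : P => (⟨keyFun ω f x,
        Finset.mem_image_of_mem _ (Finset.mem_univ x)⟩ :
        (Finset.univ.image (keyFun ω f) : Finset ℕ)))
    (by
      rw [Fintype.bijective_iff_injective_and_card]
      constructor
      · intro a b hab
        exact keyFun_injective hp ω f (congrArg Subtype.val hab)
      · rw [Fintype.card_coe,
          Finset.card_image_of_injective _ (keyFun_injective hp ω f),
          Finset.card_univ, hp])).trans
    ((Finset.univ.image (keyFun ω f)).orderIsoOfFin
      (by rw [Finset.card_image_of_injective _ (keyFun_injective hp ω f),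
          Finset.card_univ, hp])).symm.toEquiv

lemma sortE_lt_iff (hp : Fintype.card P = p) (ω : P ≃ Fin p) (f : P → ℕ) (x y : P) :
    sortE hp ω f x < sortE hp ω f y ↔ keyFun ω f x < keyFun ω f y := by
  unfold sortE
  simp only [Equiv.trans_apply, Equiv.ofBijective_apply]
  rw [show (((Finset.univ.image (keyFun ω f)).orderIsoOfFin
      (by rw [Finset.card_image_of_injective _ (keyFun_injective hp ω f),
          Finset.card_univ, hp])).symm.toEquiv : _ → Fin p)
      = (((Finset.univ.image (keyFun ω f)).orderIsoOfFin
      (by rw [Finset.card_image_of_injective _ (keyFun_injective hp ω f),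
          Finset.card_univ, hp])).symm : _ → Fin p) from rfl]
  rw [OrderIso.lt_iff_lt]
  exact Subtype.mk_lt_mk

lemma cmp_isPPart (hp : Fintype.card P = p) (ω : P ≃ Fin p) (f : P → ℕ)
    (e : P ≃ Fin p) (he : e ∈ linExts P p)
    (hc : Cmp (word (fun x => (ω x : ℕ)) e) (f ∘ e.symm)) :
    IsPPart (fun x => (ω x : ℕ)) f := by
  intro s t hst
  by_cases hne : s = t
  · subst hne
    exact ⟨le_rfl, fun h => absurd h (lt_irrefl _)⟩
  · have he2 : e s ≤ e t := (Finset.mem_filter.mp he).2 s t hst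
    have hlt : e s < e t := lt_of_le_of_ne he2 (fun hcon => hne (e.injective hcon))
    have hj : ((e t : ℕ)) < p := (e t).isLt
    have hwinj : Function.Injective (word (fun x => (ω x : ℕ)) e) :=
      word_injective ω e
    have hkey := cmp_key _ _ hwinj hc (show ((e s : ℕ)) < ((e t : ℕ)) from hlt) hj
    have h1 : (⟨((e t : ℕ)), hj⟩ : Fin p) = e t := by ext; rfl
    have h2 : (⟨((e s : ℕ)), by omega⟩ : Fin p) = e s := by ext; rfl
    rw [h1, h2] at hkey
    simp only [Function.comp_apply, word, Equiv.symm_apply_apply] at hkey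
    constructor
    · rcases hkey with h | ⟨h, _⟩ <;> omega
    · intro hlab
      have hlab2 : ((ω t : ℕ)) < ((ω s : ℕ)) := hlab
      rcases hkey with h | ⟨h, h3⟩
      · exact h
      · omega

/-- The three-way correspondence : a `(P,ω)`-partition decomposes along its unique
compatible linear extension. -/
lemma ppart_iff (hp : Fintype.card P = p) (ω : P ≃ Fin p) (f : P → ℕ) :
    IsPPart (fun x => (ω x : ℕ)) f ↔
      sortE hp ω f ∈ linExts P p ∧
        Cmp (word (fun x => (ω x : ℕ)) (sortE hp ω f)) (f ∘ (sortE hp ω f).symm) := by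
  constructor
  · intro hpp
    have hkeystrict : ∀ x y : P, x ≤ y → x ≠ y → keyFun ω f x < keyFun ω f y := by
      intro x y hxy hne
      obtain ⟨hle, hstr⟩ := hpp x y hxy
      rw [keyFun_lt_iff]
      rcases Nat.eq_or_lt_of_le hle with heq | hlt
      · right
        refine ⟨heq, ?_⟩
        have hne2 : ((ω x : ℕ)) ≠ ((ω y : ℕ)) :=
          fun hcon => hne (ω.injective (Fin.val_injective hcon))
        by_contra hcon
        have h3 : ((ω y : ℕ)) < ((ω x : ℕ)) := by omega
        have := hstr h3
        omega
      · left; exact hlt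
    constructor
    · rw [linExts, Finset.mem_filter]
      refine ⟨Finset.mem_univ _, fun x y hxy => ?_⟩
      by_cases hne : x = y
      · subst hne; exact le_rfl
      · exact le_of_lt ((sortE_lt_iff hp ω f x y).mpr (hkeystrict x y hxy hne))
    · intro i hi
      set x := (sortE hp ω f).symm ⟨i, by omega⟩ with hx
      set y := (sortE hp ω f).symm ⟨i+1, hi⟩ with hy
      have hxy : sortE hp ω f x < sortE hp ω f y := by
        rw [hx, hy, Equiv.apply_symm_apply, Equiv.apply_symm_apply]
        exact Fin.mk_lt_mk.mpr (by omega)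
      have hkey := (sortE_lt_iff hp ω f x y).mp hxy
      rw [keyFun_lt_iff] at hkey
      show f y + (if ((ω y : ℕ)) < ((ω x : ℕ)) then 1 else 0) ≤ f x
      rcases hkey with h | ⟨h, h2⟩
      · split_ifs <;> omega
      · rw [if_neg (by omega)]
        omega
  · rintro ⟨h1, h2⟩
    exact cmp_isPPart hp ω f _ h1 h2

lemma cmp_unique (hp : Fintype.card P = p) (ω : P ≃ Fin p) (f : P → ℕ)
    (e : P ≃ Fin p) (he : e ∈ linExts P p)
    (hc : Cmp (word (fun x => (ω x : ℕ)) e) (f ∘ e.symm)) :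
    e = sortE hp ω f := by
  have hwinj : Function.Injective (word (fun x => (ω x : ℕ)) e) := word_injective ω e
  have hkey : ∀ x y : P, e x < e y → keyFun ω f x < keyFun ω f y := by
    intro x y hxy
    have hj : ((e y : ℕ)) < p := (e y).isLt
    have hk := cmp_key _ _ hwinj hc (show ((e x : ℕ)) < ((e y : ℕ)) from hxy) hj
    have h1 : (⟨((e y : ℕ)), hj⟩ : Fin p) = e y := by ext; rfl
    have h2 : (⟨((e x : ℕ)), by omega⟩ : Fin p) = e x := by ext; rfl
    rw [h1, h2] at hk
    simp only [Function.comp_apply, word, Equiv.symm_apply_apply] at hk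
    rw [keyFun_lt_iff]
    rcases hk with h | ⟨h, h3⟩
    · left; exact h
    · right; exact ⟨h, h3⟩
  have hmono : StrictMono (⇑(e.symm.trans (sortE hp ω f))) := by
    intro i j hij
    simp only [Equiv.trans_apply]
    apply (sortE_lt_iff hp ω f _ _).mpr
    apply hkey
    rw [Equiv.apply_symm_apply, Equiv.apply_symm_apply]
    exact hij
  have hid : ⇑(e.symm.trans (sortE hp ω f)) = id := by
    apply (hmono.range_inj strictMono_id).mp
    rw [Equiv.range_eq_univ, Set.range_id]
  apply Equiv.ext
  intro x
  have := congrFun hid (e x)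
  simp only [Equiv.trans_apply, Equiv.symm_apply_apply, id_eq] at this
  exact this.symm

/-- counting: the `(P,ω)`-partitions of size `m` split along linear extensions. -/
lemma ncard_split (hp : Fintype.card P = p) (ω : P ≃ Fin p) (m : ℕ) :
    Set.ncard {f : P → ℕ | IsPPart (fun x => (ω x : ℕ)) f ∧ ∑ t, f t = m} =
      ∑ e ∈ linExts P p,
        Set.ncard {g : Fin p → ℕ |
          Cmp (word (fun x => (ω x : ℕ)) e) g ∧ ∑ t, g t = m} := by
  classical
  have hfin := finite_sum_eq (fun f : P → ℕ => IsPPart (fun x => (ω x : ℕ)) f) m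
  rw [Set.ncard_eq_toFinset_card _ hfin]
  have hmem : ∀ f ∈ hfin.toFinset, sortE hp ω f ∈ linExts P p := by
    intro f hf
    rw [Set.Finite.mem_toFinset] at hf
    exact ((ppart_iff hp ω f).mp hf.1).1
  rw [Finset.card_eq_sum_card_fiberwise hmem]
  refine Finset.sum_congr rfl fun e he => ?_
  have hinj : Function.Injective (fun f : P → ℕ => f ∘ e.symm) := by
    intro a b hab
    funext x
    have h2 := congrFun hab (e x)
    simpa using h2
  have hset : {g : Fin p → ℕ | Cmp (word (fun x => (ω x : ℕ)) e) g ∧ ∑ t, g t = m}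
      = (fun f : P → ℕ => f ∘ e.symm) ''
        ↑(hfin.toFinset.filter fun f => sortE hp ω f = e) := by
    ext g
    simp only [Set.mem_setOf_eq, Set.mem_image, Finset.mem_coe, Finset.mem_filter,
      Set.Finite.mem_toFinset]
    constructor
    · rintro ⟨hcmp, hsum⟩
      refine ⟨g ∘ e, ⟨⟨?_, ?_⟩, ?_⟩, ?_⟩
      · apply cmp_isPPart hp ω (g ∘ e) e he
        have hge : (g ∘ e) ∘ e.symm = g := by
          funext i
          simp
        rw [hge]
        exact hcmp
      · show ∑ t : P, g (e t) = m
        rw [Equiv.sum_comp e g]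
        exact hsum
      · refine (cmp_unique hp ω (g ∘ e) e he ?_).symm
        have hge : (g ∘ e) ∘ e.symm = g := by
          funext i
          simp
        rw [hge]
        exact hcmp
      · funext i
        simp
    · rintro ⟨f, ⟨⟨hpp, hsum⟩, hE⟩, rfl⟩
      constructor
      · have h2 := ((ppart_iff hp ω f).mp hpp).2
        rw [hE] at h2
        exact h2
      · show ∑ i : Fin p, f (e.symm i) = m
        rw [Equiv.sum_comp e.symm f]
        exact hsum
  rw [hset, Set.ncard_image_of_injective _ hinj, Set.ncard_coe_finset]

/-- counting: compatible sequences of size `m` correspond to partitions of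
`m - maj` into at most `p` parts. -/
lemma ncard_cmp (w : Fin p → ℕ) (hw : Function.Injective w) (m : ℕ) :
    Set.ncard {g : Fin p → ℕ | Cmp w g ∧ ∑ t, g t = m} =
      if majW w ≤ m then dec p (m - majW w) else 0 := by
  classical
  have hmaj : ∑ t : Fin p, cnt w ((t : ℕ)) = majW w := by
    rw [Fin.sum_univ_eq_sum_range (fun i => cnt w i) p]
    exact sum_cnt w
  split_ifs with hm
  · have hset : {g : Fin p → ℕ | Cmp w g ∧ ∑ t, g t = m}
        = (fun h : Fin p → ℕ => fun i : Fin p => h i + cnt w ((i : ℕ))) ''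
          {h : Fin p → ℕ | Antitone h ∧ ∑ t, h t = m - majW w} := by
      ext g
      simp only [Set.mem_setOf_eq, Set.mem_image]
      constructor
      · rintro ⟨hcmp, hsum⟩
        have hle : ∀ i : Fin p, cnt w ((i : ℕ)) ≤ g i := by
          intro i
          have h2 := cnt_le_g w g hcmp i.isLt
          simpa using h2
        refine ⟨fun i => g i - cnt w ((i : ℕ)), ⟨?_, ?_⟩, ?_⟩
        · intro i j hij
          show g j - cnt w ((j : ℕ)) ≤ g i - cnt w ((i : ℕ))
          have h2 := cmp_sub_antitone w g hcmp (show ((i : ℕ)) ≤ ((j : ℕ)) from hij) j.isLt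
          simpa using h2
        · show ∑ t : Fin p, (g t - cnt w ((t : ℕ))) = m - majW w
          have hsum2 : ∑ t : Fin p, (g t - cnt w ((t : ℕ)))
              + ∑ t : Fin p, cnt w ((t : ℕ)) = ∑ t, g t := by
            rw [← Finset.sum_add_distrib]
            exact Finset.sum_congr rfl fun i _ => by have := hle i; omega
          omega
        · funext i
          show g i - cnt w ((i : ℕ)) + cnt w ((i : ℕ)) = g i
          have := hle i
          omega
      · rintro ⟨h, ⟨hA, hsum⟩, rfl⟩
        constructor
        · intro i hi
          show h ⟨i+1, hi⟩ + cnt w (i+1)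
              + (if w ⟨i+1, hi⟩ < w ⟨i, by omega⟩ then 1 else 0)
              ≤ h ⟨i, by omega⟩ + cnt w i
          have hA2 : h ⟨i+1, hi⟩ ≤ h ⟨i, by omega⟩ :=
            hA (Fin.mk_le_mk.mpr (by omega))
          have h5 := cnt_succ w i
          by_cases hd : w ⟨i+1, hi⟩ < w ⟨i, by omega⟩
          · rw [if_pos hd]
            rw [if_pos ((desAt_iff w hi).mpr hd)] at h5
            omega
          · rw [if_neg hd]
            rw [if_neg (fun hcon => hd ((desAt_iff w hi).mp hcon))] at h5
            omega
        · show ∑ t : Fin p, (h t + cnt w ((t : ℕ))) = m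
          rw [Finset.sum_add_distrib, hsum, hmaj]
          omega
    have hinj : Function.Injective
        (fun h : Fin p → ℕ => fun i : Fin p => h i + cnt w ((i : ℕ))) := by
      intro a b hab
      funext i
      have h2 := congrFun hab i
      simp only at h2
      omega
    rw [hset, Set.ncard_image_of_injective _ hinj]
    rfl
  · rw [Set.ncard_eq_zero (finite_sum_eq _ m)]
    ext g
    simp only [Set.mem_setOf_eq, Set.mem_empty_iff_false, iff_false, not_and]
    intro hcmp hsum
    have h2 : ∑ t : Fin p, cnt w ((t : ℕ)) ≤ ∑ t, g t :=
      Finset.sum_le_sum fun i _ => by simpa using cnt_le_g w g hcmp i.isLt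
    omega

end Main

/-- Stanley's theorem: the generating function of `(P,ω)`-partitions by size
equals the major-index `q`-analogue of linear extensions divided by
`∏_{i=1}^p (1 - q^i)`. -/
theorem GPart_eq_eMaj_div_prod (P : Type) [Fintype P] [PartialOrder P]
    (p : ℕ) (hp : Fintype.card P = p) (ω : P ≃ Fin p) :
    GPart P (IsPPart (fun x => (ω x : ℕ))) =
      (∑ f ∈ linExts P p,
          (PowerSeries.X : PowerSeries ℚ) ^ majW (word (fun x => (ω x : ℕ)) f)) *
        (∏ i ∈ Finset.range p,
            (1 - (PowerSeries.X : PowerSeries ℚ) ^ (i + 1)))⁻¹ := by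
  subst hp
  have hD := Dec_mul_prod (Fintype.card P)
  have hc : (PowerSeries.constantCoeff) (∏ i ∈ Finset.range (Fintype.card P),
      (1 - (PowerSeries.X : PowerSeries ℚ) ^ (i + 1))) ≠ 0 := by
    intro h0
    have h1 := congrArg (PowerSeries.constantCoeff) hD
    rw [map_mul, h0, mul_zero] at h1
    simpa using h1
  rw [(PowerSeries.inv_eq_iff_mul_eq_one hc).mpr hD]
  ext m
  rw [Finset.sum_mul, map_sum]
  have hre : ∀ e ∈ linExts P (Fintype.card P),
      (PowerSeries.coeff m) ((PowerSeries.X : PowerSeries ℚ)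
          ^ majW (word (fun x => (ω x : ℕ)) e) * Dec (Fintype.card P))
        = if majW (word (fun x => (ω x : ℕ)) e) ≤ m
            then ((dec (Fintype.card P) (m - majW (word (fun x => (ω x : ℕ)) e)) : ℚ))
            else 0 := by
    intro e _
    rw [PowerSeries.coeff_X_pow_mul']
    split_ifs with h
    · simp [Dec]
    · rfl
  rw [Finset.sum_congr rfl hre]
  simp only [GPart, PowerSeries.coeff_mk]
  rw [ncard_split rfl ω m]
  push_cast
  refine Finset.sum_congr rfl fun e he => ?_
  rw [ncard_cmp _ (word_injective ω e) m]
  split_ifs <;> simp
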